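/- Let (Ω,Σ,μ) be a σ-finite measure space equipped with an admissible covering (Σ_a,Σ_b). Then there exists 0 < c < 1, depending only on the admissible covering, such that min{‖E_{Σ_a}E_{Σ_b}f‖_{L_2(μ)}, ‖E_{Σ_b}E_{Σ_a}f‖_{L_2(μ)}} ≤ c‖f‖_{L_2(μ)} holds for every f ∈ L_2(μ) when μ(Ω) = ∞, and for every f ∈ L_2(μ) with ∫_Ω f dμ = 0 when μ(Ω) < ∞. -/

import Mathlib

open MeasureTheory ENNReal

/-- An atomic σ-subalgebra of the ambient σ-algebra, encoded by the countable
measurable partition of `Ω` into atoms of positive finite measure generating it. -/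
structure AtomicPartition {Ω : Type*} {m : MeasurableSpace Ω} (μ : Measure Ω) where
  ι : Type
  countable : Countable ι
  atom : ι → Set Ω
  measurableSet : ∀ i, MeasurableSet (atom i)
  disjoint : Pairwise (Function.onFun Disjoint atom)
  cover : ⋃ i, atom i = Set.univ
  pos : ∀ i, 0 < μ (atom i)
  lt_top : ∀ i, μ (atom i) < ∞

namespace AtomicPartition

variable {Ω : Type*} {m : MeasurableSpace Ω} {μ : Measure Ω}

/-- The σ-algebra generated by the atoms. -/
def sigma (P : AtomicPartition μ) : MeasurableSpace Ω :=
  MeasurableSpace.generateFrom (Set.range P.atom)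

/-- The conditional expectation onto the atomic σ-algebra:
`E f = ∑_A (μ(A)⁻¹ ∫_A f dμ) · 1_A`. -/
noncomputable def condExp (P : AtomicPartition μ) {E : Type*} [NormedAddCommGroup E]
    [NormedSpace ℝ E] (f : Ω → E) : Ω → E := fun x =>
  ∑' i, Set.indicator (P.atom i)
    (fun _ => (μ (P.atom i)).toReal⁻¹ • ∫ y in P.atom i, f y ∂μ) x

end AtomicPartition

/-- `|R_B|`: the number (in `ℝ≥0∞`) of atoms of `Pa` meeting the atom `Pb.atom j`
in positive measure. -/
noncomputable def rCard {Ω : Type*} {m : MeasurableSpace Ω} (μ : Measure Ω)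
    (Pa Pb : AtomicPartition μ) (j : Pb.ι) : ℝ≥0∞ :=
  ∑' _i : {i : Pa.ι // 0 < μ (Pa.atom i ∩ Pb.atom j)}, 1

/-- `∑_{B ∈ R_A} |R_B| · μ(A∩B)² / (μ(A)μ(B))` for the atom `A = Pa.atom i`
(terms with `μ(A∩B) = 0` vanish, so we may sum over all atoms of `Pb`). -/
noncomputable def atomSum {Ω : Type*} {m : MeasurableSpace Ω} (μ : Measure Ω)
    (Pa Pb : AtomicPartition μ) (i : Pa.ι) : ℝ≥0∞ :=
  ∑' j : Pb.ι, rCard μ Pa Pb j * μ (Pa.atom i ∩ Pb.atom j) ^ 2 /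
    (μ (Pa.atom i) * μ (Pb.atom j))

/-- `Σ_a ∩ Σ_b = {Ω, ∅}` modulo `μ`-null sets. -/
def TrivialIntersection {Ω : Type*} {m : MeasurableSpace Ω} (μ : Measure Ω)
    (ma mb : MeasurableSpace Ω) : Prop :=
  ∀ S T : Set Ω, MeasurableSet[ma] S → MeasurableSet[mb] T →
    μ (symmDiff S T) = 0 → μ S = 0 ∨ μ Sᶜ = 0

/-- `(Σ_a, Σ_b)` is an admissible covering of `(Ω, Σ, μ)` with distinguished atoms
`A0, B0` (which are actual atoms when `μ` is finite, and `∅`, i.e. `none`, when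
`μ(Ω) = ∞`). -/
structure IsAdmissibleCovering {Ω : Type*} {m : MeasurableSpace Ω} (μ : Measure Ω)
    (Pa Pb : AtomicPartition μ) (A0 : Option Pa.ι) (B0 : Option Pb.ι) : Prop where
  trivial_inter : TrivialIntersection μ Pa.sigma Pb.sigma
  infinite_case : μ Set.univ = ∞ → A0 = none ∧ B0 = none
  finite_case : μ Set.univ < ∞ → A0.isSome ∧ B0.isSome
  small : min (⨆ i ∈ {i : Pa.ι | some i ≠ A0}, atomSum μ Pa Pb i)
      (⨆ j ∈ {j : Pb.ι | some j ≠ B0}, atomSum μ Pb Pa j) < 1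

section Helpers

/-- Cauchy–Schwarz for `ℝ≥0∞`-valued tsums. -/
lemma ennreal_cauchy_schwarz {ι : Type*} [Countable ι] (a b : ι → ℝ≥0∞) :
    (∑' i, a i * b i) ^ 2 ≤ (∑' i, a i ^ 2) * (∑' i, b i ^ 2) := by
  letI : MeasurableSpace ι := ⊤
  have hc : ∀ f : ι → ℝ≥0∞, ∫⁻ i, f i ∂(Measure.count) = ∑' i, f i := fun f =>
    lintegral_count f
  have h22 : (2:ℝ).HolderConjugate 2 := Real.HolderConjugate.two_two
  have := ENNReal.lintegral_mul_le_Lp_mul_Lq (Measure.count) h22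
    (f := a) (g := b) (measurable_from_top).aemeasurable (measurable_from_top).aemeasurable
  simp only [Pi.mul_apply, hc] at this
  calc (∑' i, a i * b i) ^ 2
      ≤ ((∑' i, a i ^ (2:ℝ)) ^ (1/(2:ℝ)) * (∑' i, b i ^ (2:ℝ)) ^ (1/(2:ℝ))) ^ 2 := by
        exact pow_le_pow_left' this 2
    _ = (∑' i, a i ^ 2) * (∑' i, b i ^ 2) := by
        rw [mul_pow]
        have e : ∀ g : ι → ℝ≥0∞, ((∑' i, g i ^ (2:ℝ)) ^ (1/(2:ℝ))) ^ 2 = ∑' i, g i ^ 2 := by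
          intro g
          rw [← ENNReal.rpow_natCast _ 2, ← ENNReal.rpow_mul]
          norm_num
        rw [e, e]

lemma ennreal_add_sq_le (a b : ℝ≥0∞) : (a + b) ^ 2 ≤ 2 * a ^ 2 + 2 * b ^ 2 := by
  rcases eq_or_ne a ∞ with ha | ha
  · subst ha; simp [top_add, top_pow]
  rcases eq_or_ne b ∞ with hb | hb
  · subst hb; simp [add_top, top_pow]
  rw [← ENNReal.ofReal_toReal ha, ← ENNReal.ofReal_toReal hb,
    ← ENNReal.ofReal_add ENNReal.toReal_nonneg ENNReal.toReal_nonneg]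
  rw [← ENNReal.ofReal_pow (by positivity), ← ENNReal.ofReal_pow ENNReal.toReal_nonneg,
    ← ENNReal.ofReal_pow ENNReal.toReal_nonneg]
  rw [show (2:ℝ≥0∞) = ENNReal.ofReal (2:ℝ) by simp]
  rw [← ENNReal.ofReal_mul (by norm_num), ← ENNReal.ofReal_mul (by norm_num),
    ← ENNReal.ofReal_add (by positivity) (by positivity)]
  refine ENNReal.ofReal_le_ofReal ?_
  nlinarith [sq_nonneg (a.toReal - b.toReal), sq_nonneg (a.toReal + b.toReal)]

/-- Pythagoras/parallel-shift identity for weighted `ℓ²` sums of complex numbers. -/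
lemma pythagoras_shift {ι : Type*} [Countable ι] (w : ι → ℝ≥0∞) (x : ι → ℂ) (θ : ℂ)
    (hwt : ∀ i, w i ≠ ∞) (hW : ∑' i, w i ≠ ∞)
    (hsum : HasSum (fun i => (w i).toReal • x i) 0) :
    ∑' i, w i * (‖x i - θ‖₊ : ℝ≥0∞) ^ 2
      = ∑' i, w i * (‖x i‖₊ : ℝ≥0∞) ^ 2 + (‖θ‖₊ : ℝ≥0∞) ^ 2 * ∑' i, w i := by
  by_cases hX : ∑' i, w i * (‖x i‖₊ : ℝ≥0∞) ^ 2 = ∞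
  · rw [hX]
    have hle : ∑' i, w i * (‖x i‖₊ : ℝ≥0∞) ^ 2
        ≤ 2 * (∑' i, w i * (‖x i - θ‖₊ : ℝ≥0∞) ^ 2) + 2 * ((‖θ‖₊ : ℝ≥0∞) ^ 2 * ∑' i, w i) := by
      rw [← ENNReal.tsum_mul_left, ← ENNReal.tsum_mul_left, ← ENNReal.tsum_mul_left,
        ← ENNReal.tsum_add]
      refine Summable.tsum_le_tsum (fun i => ?_) ENNReal.summable ENNReal.summable
      have h1 : (‖x i‖₊ : ℝ≥0∞) ≤ (‖x i - θ‖₊ : ℝ≥0∞) + (‖θ‖₊ : ℝ≥0∞) := by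
        rw [← ENNReal.coe_add]
        exact_mod_cast (nnnorm_add_le (x i - θ) θ).trans_eq' (by rw [sub_add_cancel])
      calc w i * (‖x i‖₊ : ℝ≥0∞) ^ 2
          ≤ w i * ((‖x i - θ‖₊ : ℝ≥0∞) + (‖θ‖₊ : ℝ≥0∞)) ^ 2 := by gcongr
        _ ≤ w i * (2 * (‖x i - θ‖₊ : ℝ≥0∞) ^ 2 + 2 * (‖θ‖₊ : ℝ≥0∞) ^ 2) := by
            gcongr; exact ennreal_add_sq_le _ _
        _ = 2 * (w i * (‖x i - θ‖₊ : ℝ≥0∞) ^ 2) + 2 * ((‖θ‖₊ : ℝ≥0∞) ^ 2 * w i) := by ring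
    have hfin : (‖θ‖₊ : ℝ≥0∞) ^ 2 * ∑' i, w i ≠ ∞ :=
      ENNReal.mul_ne_top (ENNReal.pow_ne_top ENNReal.coe_ne_top) hW
    have htop : ∑' i, w i * (‖x i - θ‖₊ : ℝ≥0∞) ^ 2 = ∞ := by
      by_contra h
      have h2 : (2 * (∑' i, w i * (‖x i - θ‖₊ : ℝ≥0∞) ^ 2)
          + 2 * ((‖θ‖₊ : ℝ≥0∞) ^ 2 * ∑' i, w i)) ≠ ∞ :=
        ENNReal.add_ne_top.2 ⟨ENNReal.mul_ne_top (by norm_num) h,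
          ENNReal.mul_ne_top (by norm_num) hfin⟩
      exact (ne_top_of_le_ne_top h2 hle) hX
    rw [htop, top_add]
  · set r : ι → ℝ := fun i => (w i).toReal with hr
    have hrnn : ∀ i, 0 ≤ r i := fun i => ENNReal.toReal_nonneg
    have hterm : ∀ (z : ℂ) i, w i * (‖z‖₊ : ℝ≥0∞) ^ 2 = ENNReal.ofReal (r i * ‖z‖ ^ 2) := by
      intro z i
      rw [ENNReal.ofReal_mul (hrnn i), ENNReal.ofReal_pow (norm_nonneg _),
        ENNReal.ofReal_toReal (hwt i)]
      rw [ofReal_norm, enorm_eq_nnnorm]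
    have hrs : Summable r := ENNReal.summable_toReal hW
    have hx2 : Summable (fun i => r i * ‖x i‖ ^ 2) := by
      have h := ENNReal.summable_toReal hX
      refine h.congr fun i => ?_
      rw [hterm (x i) i, ENNReal.toReal_ofReal (by positivity)]
    have hre : HasSum (fun i => r i * (x i * (starRingEnd ℂ) θ).re) 0 := by
      have h1 : HasSum (fun i => (r i • x i) * (starRingEnd ℂ) θ) 0 := by
        simpa using hsum.mul_right ((starRingEnd ℂ) θ)
      have h2 := h1.mapL Complex.reCLM
      simp only [Complex.reCLM_apply, Complex.zero_re] at h2
      refine h2.congr_fun fun i => ?_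
      rw [smul_mul_assoc]
      simp [Complex.real_smul, Complex.mul_re]
    -- pointwise expansion of the norm
    have hexp : ∀ i, r i * ‖x i - θ‖ ^ 2
        = (r i * ‖x i‖ ^ 2 + r i * ‖θ‖ ^ 2) - 2 * (r i * (x i * (starRingEnd ℂ) θ).re) := by
      intro i
      have : ‖x i - θ‖ ^ 2 = ‖x i‖ ^ 2 + ‖θ‖ ^ 2 - 2 * (x i * (starRingEnd ℂ) θ).re := by
        simp only [Complex.sq_norm]
        exact Complex.normSq_sub (x i) θ
      rw [this]; ring
    -- summabilities of the remaining pieces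
    have hθ2 : Summable (fun i => r i * ‖θ‖ ^ 2) := hrs.mul_right (‖θ‖ ^ 2)
    have hre' : Summable (fun i => 2 * (r i * (x i * (starRingEnd ℂ) θ).re)) :=
      (hre.summable).mul_left 2
    have hsum12 : Summable (fun i => r i * ‖x i‖ ^ 2 + r i * ‖θ‖ ^ 2) := hx2.add hθ2
    have hsub : Summable (fun i => r i * ‖x i - θ‖ ^ 2) := by
      refine Summable.congr (hsum12.sub hre') fun i => (hexp i).symm
    -- the real identity
    have hreal : ∑' i, r i * ‖x i - θ‖ ^ 2
        = ∑' i, r i * ‖x i‖ ^ 2 + ‖θ‖ ^ 2 * ∑' i, r i := by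
      calc ∑' i, r i * ‖x i - θ‖ ^ 2
          = ∑' i, ((r i * ‖x i‖ ^ 2 + r i * ‖θ‖ ^ 2)
              - 2 * (r i * (x i * (starRingEnd ℂ) θ).re)) := tsum_congr hexp
        _ = (∑' i, (r i * ‖x i‖ ^ 2 + r i * ‖θ‖ ^ 2))
              - ∑' i, 2 * (r i * (x i * (starRingEnd ℂ) θ).re) := Summable.tsum_sub hsum12 hre'
        _ = (∑' i, r i * ‖x i‖ ^ 2 + ∑' i, r i * ‖θ‖ ^ 2) - 2 * 0 := by
            rw [Summable.tsum_add hx2 hθ2, tsum_mul_left, hre.tsum_eq]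
        _ = ∑' i, r i * ‖x i‖ ^ 2 + ‖θ‖ ^ 2 * ∑' i, r i := by
            rw [tsum_mul_right]; ring
    -- lift back to `ℝ≥0∞`
    have hWr : ∑' i, w i = ENNReal.ofReal (∑' i, r i) := by
      rw [ENNReal.ofReal_tsum_of_nonneg hrnn hrs]
      exact tsum_congr fun i => (ENNReal.ofReal_toReal (hwt i)).symm
    calc ∑' i, w i * (‖x i - θ‖₊ : ℝ≥0∞) ^ 2
        = ∑' i, ENNReal.ofReal (r i * ‖x i - θ‖ ^ 2) := tsum_congr fun i => hterm _ i
      _ = ENNReal.ofReal (∑' i, r i * ‖x i - θ‖ ^ 2) :=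
          (ENNReal.ofReal_tsum_of_nonneg (fun i => by positivity) hsub).symm
      _ = ENNReal.ofReal (∑' i, r i * ‖x i‖ ^ 2 + ‖θ‖ ^ 2 * ∑' i, r i) := by rw [hreal]
      _ = ENNReal.ofReal (∑' i, r i * ‖x i‖ ^ 2)
            + ENNReal.ofReal (‖θ‖ ^ 2 * ∑' i, r i) := by
          rw [ENNReal.ofReal_add (tsum_nonneg fun i => by positivity)
            (mul_nonneg (by positivity) (tsum_nonneg fun i => hrnn i))]
      _ = ∑' i, w i * (‖x i‖₊ : ℝ≥0∞) ^ 2 + (‖θ‖₊ : ℝ≥0∞) ^ 2 * ∑' i, w i := by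
          congr 1
          · rw [ENNReal.ofReal_tsum_of_nonneg (fun i => by positivity) hx2]
            exact tsum_congr fun i => (hterm (x i) i).symm
          · rw [ENNReal.ofReal_mul (by positivity), ENNReal.ofReal_pow (norm_nonneg _),
              ofReal_norm, enorm_eq_nnnorm, hWr]

lemma counting_le {ιa ιb : Type*} [Countable ιa] [Countable ιb]
    (p : ιa → ιb → Prop) [∀ i j, Decidable (p i j)] (d : ιb → ℝ≥0∞) :
    ∑' i, ∑' j, (if p i j then d j / (∑' _k : {k : ιa // p k j}, (1:ℝ≥0∞)) else 0)
      ≤ ∑' j, d j := by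
  rw [ENNReal.tsum_comm]
  refine Summable.tsum_le_tsum (fun j => ?_) ENNReal.summable ENNReal.summable
  set R : ℝ≥0∞ := ∑' _k : {k : ιa // p k j}, (1:ℝ≥0∞) with hR
  have h1 : ∑' i, (if p i j then d j / R else 0) = (d j / R) * R := by
    have h2 : ∑' _k : {k : ιa // p k j}, (d j / R) = (d j / R) * R := by
      rw [hR, ← ENNReal.tsum_mul_left]
      exact tsum_congr fun k => (mul_one _).symm
    rw [← h2, show {k : ιa // p k j} = {k : ιa // k ∈ {k : ιa | p k j}} from rfl,
      tsum_subtype {k : ιa | p k j} (fun _ => d j / R)]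
    exact tsum_congr fun k => by
      rw [Set.indicator_apply]
      simp only [Set.mem_setOf_eq]
  rw [h1, mul_comm]
  exact ENNReal.mul_div_le

end Helpers

namespace AtomicPartition

variable {Ω : Type*} {m : MeasurableSpace Ω} {μ : Measure Ω}

attribute [instance] AtomicPartition.countable

/-- The value of the conditional expectation on atom `i`. -/
noncomputable def val (P : AtomicPartition μ) (f : Ω → ℂ) (i : P.ι) : ℂ :=
  (μ (P.atom i)).toReal⁻¹ • ∫ y in P.atom i, f y ∂μ

lemma exists_atom (P : AtomicPartition μ) (x : Ω) : ∃ i, x ∈ P.atom i := by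
  have := P.cover
  rw [Set.iUnion_eq_univ_iff] at this
  exact this x

lemma atom_unique (P : AtomicPartition μ) {i j : P.ι} {x : Ω}
    (hi : x ∈ P.atom i) (hj : x ∈ P.atom j) : i = j := by
  by_contra h
  exact (P.disjoint h).le_bot ⟨hi, hj⟩ 

lemma condExp_apply (P : AtomicPartition μ) (f : Ω → ℂ) {i : P.ι} {x : Ω}
    (hx : x ∈ P.atom i) : P.condExp f x = P.val f i := by
  unfold condExp
  refine (tsum_eq_single i fun j hj => ?_).trans ?_
  · exact Set.indicator_of_notMem (fun hxj => hj (P.atom_unique hxj hx)) _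
  · exact Set.indicator_of_mem hx _

lemma measurable_condExp (P : AtomicPartition μ) (f : Ω → ℂ) :
    Measurable (P.condExp f) := by
  intro t _
  have : P.condExp f ⁻¹' t = ⋃ i : {i : P.ι // P.val f i ∈ t}, P.atom i.1 := by
    ext x
    obtain ⟨i, hi⟩ := P.exists_atom x
    simp only [Set.mem_preimage, Set.mem_iUnion]
    constructor
    · intro hx
      exact ⟨⟨i, by rwa [P.condExp_apply f hi] at hx⟩, hi⟩
    · rintro ⟨j, hj⟩
      rw [P.condExp_apply f hj]
      exact j.2
  rw [this]
  exact MeasurableSet.iUnion fun i => P.measurableSet i.1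

lemma lintegral_eq_tsum (P : AtomicPartition μ) (h : Ω → ℝ≥0∞) :
    ∫⁻ x, h x ∂μ = ∑' i, ∫⁻ x in P.atom i, h x ∂μ := by
  rw [← setLIntegral_univ, ← P.cover, lintegral_iUnion P.measurableSet P.disjoint]

lemma setLIntegral_condExp (P : AtomicPartition μ) (F : ℂ → ℝ≥0∞) (f : Ω → ℂ) (i : P.ι) :
    ∫⁻ x in P.atom i, F (P.condExp f x) ∂μ = F (P.val f i) * μ (P.atom i) := by
  rw [setLIntegral_congr_fun (P.measurableSet i)
    (fun x hx => by rw [P.condExp_apply f hx]),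
    setLIntegral_const]

end AtomicPartition


section RowBound
variable {Ω : Type*} {m : MeasurableSpace Ω} {μ : Measure Ω}

-- mimic context pieces
variable (Pa Pb : AtomicPartition μ)

/-- Σ_j μ(s ∩ B_j) = μ s -/
lemma measure_inter_tsum (P : AtomicPartition μ) {s : Set Ω} (hs : MeasurableSet s) :
    ∑' j, μ (s ∩ P.atom j) = μ s := by
  rw [← measure_iUnion (fun j k hjk => (P.disjoint hjk).mono
      Set.inter_subset_right Set.inter_subset_right)
    (fun j => hs.inter (P.measurableSet j)), ← Set.inter_iUnion, P.cover, Set.inter_univ]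

open Classical in
/-- Weighted Cauchy-Schwarz row bound with the `rCard` weights. -/
lemma row_bound (i : Pa.ι) (hI : atomSum μ Pa Pb i < 1) (d : Pb.ι → ℝ≥0∞) :
    (∑' j, μ (Pa.atom i ∩ Pb.atom j) * d j) ^ 2
      ≤ (μ (Pa.atom i) * atomSum μ Pa Pb i)
        * ∑' j, (if 0 < μ (Pa.atom i ∩ Pb.atom j)
            then μ (Pb.atom j) * (d j) ^ 2 / rCard μ Pa Pb j else 0) := by
  haveI := Pa.countable; haveI := Pb.countable
  set mij : Pb.ι → ℝ≥0∞ := fun j => μ (Pa.atom i ∩ Pb.atom j) with hmij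
  set R : Pb.ι → ℝ≥0∞ := fun j => rCard μ Pa Pb j with hRdef
  set a : Pb.ι → ℝ≥0∞ := fun j => R j ^ (1/2:ℝ) * mij j * (μ (Pb.atom j) ^ (1/2:ℝ))⁻¹ with ha
  set b : Pb.ι → ℝ≥0∞ := fun j =>
    if 0 < mij j then μ (Pb.atom j) ^ (1/2:ℝ) * (R j ^ (1/2:ℝ))⁻¹ * d j else 0 with hb
  have hμBpos : ∀ j, μ (Pb.atom j) ≠ 0 := fun j => (Pb.pos j).ne'
  have hμBfin : ∀ j, μ (Pb.atom j) ≠ ∞ := fun j => (Pb.lt_top j).ne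
  have hsqB : ∀ j, μ (Pb.atom j) ^ (1/2:ℝ) ≠ 0 ∧ μ (Pb.atom j) ^ (1/2:ℝ) ≠ ∞ := fun j =>
    ⟨by simp [ENNReal.rpow_eq_zero_iff, hμBpos j, hμBfin j],
     by simp [ENNReal.rpow_eq_top_iff, hμBpos j, hμBfin j]⟩
  -- each relevant `R j` is finite and nonzero
  have hRpos : ∀ j, 0 < mij j → R j ≠ 0 := by
    intro j hj
    have : (1:ℝ≥0∞) ≤ R j := by
      rw [hRdef]
      exact le_trans (le_refl 1) (ENNReal.le_tsum (⟨i, hj⟩ : {k : Pa.ι // 0 < μ (Pa.atom k ∩ Pb.atom j)}))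
    exact fun h0 => by simp [h0] at this
  have hRfin : ∀ j, 0 < mij j → R j ≠ ∞ := by
    intro j hj hRtop
    have hterm : R j * mij j ^ 2 / (μ (Pa.atom i) * μ (Pb.atom j))
        ≤ atomSum μ Pa Pb i := ENNReal.le_tsum j
    rw [hRtop, ENNReal.top_mul (pow_ne_zero 2 hj.ne'),
      ENNReal.top_div_of_ne_top (ENNReal.mul_ne_top (Pa.lt_top i).ne (hμBfin j))] at hterm
    exact absurd (le_trans hterm hI.le) (by simp)
  have hsqR : ∀ j, 0 < mij j → (R j ^ (1/2:ℝ) ≠ 0 ∧ R j ^ (1/2:ℝ) ≠ ∞) := fun j hj =>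
    ⟨by simp [ENNReal.rpow_eq_zero_iff, hRpos j hj, hRfin j hj],
     by simp [ENNReal.rpow_eq_top_iff, hRpos j hj, hRfin j hj]⟩
  -- step 1 : pointwise bound
  have hpt : ∀ j, mij j * d j ≤ a j * b j := by
    intro j
    by_cases hj : 0 < mij j
    · rw [ha, hb]
      simp only [if_pos hj]
      have e : R j ^ (1/2:ℝ) * mij j * (μ (Pb.atom j) ^ (1/2:ℝ))⁻¹
            * (μ (Pb.atom j) ^ (1/2:ℝ) * (R j ^ (1/2:ℝ))⁻¹ * d j)
          = (R j ^ (1/2:ℝ) * (R j ^ (1/2:ℝ))⁻¹)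
            * ((μ (Pb.atom j) ^ (1/2:ℝ))⁻¹ * μ (Pb.atom j) ^ (1/2:ℝ)) * (mij j * d j) := by
        ring
      rw [e, ENNReal.mul_inv_cancel (hsqR j hj).1 (hsqR j hj).2,
        ENNReal.inv_mul_cancel (hsqB j).1 (hsqB j).2, one_mul, one_mul]
    · have : mij j = 0 := by simpa using hj
      simp [this]
  -- step 2 : sum of `a j ^ 2`
  have hsa : ∑' j, a j ^ 2 = μ (Pa.atom i) * atomSum μ Pa Pb i := by
    have : atomSum μ Pa Pb i
        = ∑' j, R j * mij j ^ 2 / (μ (Pa.atom i) * μ (Pb.atom j)) := rfl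
    rw [this, ← ENNReal.tsum_mul_left]
    refine tsum_congr fun j => ?_
    rw [ha]
    have hA0 : μ (Pa.atom i) ≠ 0 := (Pa.pos i).ne'
    have hAt : μ (Pa.atom i) ≠ ∞ := (Pa.lt_top i).ne
    by_cases hj : 0 < mij j
    · rw [mul_pow, mul_pow, ← ENNReal.rpow_natCast (R j ^ (1/2:ℝ)) 2,
        ← ENNReal.rpow_mul (R j), ← ENNReal.inv_pow,
        ← ENNReal.rpow_natCast (μ (Pb.atom j) ^ (1/2:ℝ)) 2, ← ENNReal.rpow_mul (μ (Pb.atom j))]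
      norm_num
      rw [div_eq_mul_inv, ENNReal.mul_inv (Or.inl hA0) (Or.inl hAt)]
      calc R j * mij j ^ 2 * (μ (Pb.atom j))⁻¹
          = (μ (Pa.atom i) * (μ (Pa.atom i))⁻¹) * (R j * mij j ^ 2 * (μ (Pb.atom j))⁻¹) := by
            rw [ENNReal.mul_inv_cancel hA0 hAt, one_mul]
        _ = μ (Pa.atom i) * (R j * mij j ^ 2 * ((μ (Pa.atom i))⁻¹ * (μ (Pb.atom j))⁻¹)) := by
            ring
    · have h0 : mij j = 0 := by simpa using hj
      simp [h0, hA0, hAt]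
  -- step 3 : sum of `b j ^ 2`
  have hsb : ∑' j, b j ^ 2
      = ∑' j, (if 0 < mij j then μ (Pb.atom j) * (d j) ^ 2 / rCard μ Pa Pb j else 0) := by
    refine tsum_congr fun j => ?_
    by_cases hj : 0 < mij j
    · simp only [hb, if_pos hj]
      rw [mul_pow, mul_pow, ← ENNReal.inv_pow,
        ← ENNReal.rpow_natCast (R j ^ (1/2:ℝ)) 2, ← ENNReal.rpow_mul (R j),
        ← ENNReal.rpow_natCast (μ (Pb.atom j) ^ (1/2:ℝ)) 2, ← ENNReal.rpow_mul (μ (Pb.atom j))]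
      norm_num
      rw [div_eq_mul_inv, hRdef]
      ring
    · simp only [hb, if_neg hj]
      simp
  calc (∑' j, mij j * d j) ^ 2
      ≤ (∑' j, a j * b j) ^ 2 := by
        exact pow_le_pow_left' (Summable.tsum_le_tsum hpt ENNReal.summable ENNReal.summable) 2
    _ ≤ (∑' j, a j ^ 2) * (∑' j, b j ^ 2) := ennreal_cauchy_schwarz a b
    _ = (μ (Pa.atom i) * atomSum μ Pa Pb i)
        * ∑' j, (if 0 < mij j then μ (Pb.atom j) * (d j) ^ 2 / rCard μ Pa Pb j else 0) := by
        rw [hsa, hsb]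

end RowBound

section MoreHelpers

variable {Ω : Type*} {m : MeasurableSpace Ω} {μ : Measure Ω}

/-- scalar juggling : `w * ‖w.toReal⁻¹ • z‖² = w⁻¹ * ‖z‖²`. -/
lemma smul_inv_norm_sq {w : ℝ≥0∞} (hw0 : w ≠ 0) (hwt : w ≠ ∞) (z : ℂ) :
    (‖w.toReal⁻¹ • z‖₊ : ℝ≥0∞) ^ 2 * w = (‖z‖₊ : ℝ≥0∞) ^ 2 * w⁻¹ := by
  have htr : 0 < w.toReal := ENNReal.toReal_pos hw0 hwt
  have h1 : (‖w.toReal⁻¹ • z‖₊ : ℝ≥0∞) = w⁻¹ * (‖z‖₊ : ℝ≥0∞) := by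
    rw [← enorm_eq_nnnorm, ← ofReal_norm, norm_smul, Real.norm_eq_abs,
      abs_of_pos (by positivity), ENNReal.ofReal_mul (by positivity),
      ENNReal.ofReal_inv_of_pos htr, ENNReal.ofReal_toReal hwt, ofReal_norm, enorm_eq_nnnorm]
  rw [h1, mul_pow, mul_comm, ← mul_assoc]
  have : w * (w⁻¹) ^ 2 = w⁻¹ := by
    rw [sq, ← mul_assoc, ENNReal.mul_inv_cancel hw0 hwt, one_mul]
  rw [this, mul_comm]

/-- `‖w.toReal • z‖ = w * ‖z‖` in `ℝ≥0∞`, for finite `w`. -/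
lemma norm_toReal_smul {w : ℝ≥0∞} (hwt : w ≠ ∞) (z : ℂ) :
    (‖w.toReal • z‖₊ : ℝ≥0∞) = w * (‖z‖₊ : ℝ≥0∞) := by
  rw [← enorm_eq_nnnorm, ← ofReal_norm, norm_smul, Real.norm_eq_abs,
    abs_of_nonneg ENNReal.toReal_nonneg, ENNReal.ofReal_mul ENNReal.toReal_nonneg,
    ENNReal.ofReal_toReal hwt, ofReal_norm, enorm_eq_nnnorm]

/-- the `ℝ≥0∞`-valued triangle inequality for `tsum` over `ℂ`. -/
lemma enn_norm_tsum_le {ι : Type*} (x : ι → ℂ) :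
    (‖∑' i, x i‖₊ : ℝ≥0∞) ≤ ∑' i, (‖x i‖₊ : ℝ≥0∞) := by
  by_cases h : Summable fun i => ‖x i‖₊
  · rw [← ENNReal.coe_tsum h]
    exact_mod_cast nnnorm_tsum_le h
  · have : ∑' i, (‖x i‖₊ : ℝ≥0∞) = ⊤ := by
      by_contra hne
      exact h (ENNReal.tsum_coe_ne_top_iff_summable.1 hne)
    rw [this]
    exact le_top

/-- Cauchy-Schwarz for a lintegral against the constant `1`. -/
lemma lintegral_sq_le (ν : Measure Ω) (φ : Ω → ℝ≥0∞) (hφ : AEMeasurable φ ν) :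
    (∫⁻ x, φ x ∂ν) ^ 2 ≤ ν Set.univ * ∫⁻ x, φ x ^ 2 ∂ν := by
  have h22 : (2:ℝ).HolderConjugate 2 := Real.HolderConjugate.two_two
  have h := ENNReal.lintegral_mul_le_Lp_mul_Lq ν h22
    (f := fun _ => 1) (g := φ) aemeasurable_const hφ
  simp only [Pi.mul_apply, one_mul] at h
  have e1 : ∫⁻ _x, (1:ℝ≥0∞) ^ (2:ℝ) ∂ν = ν Set.univ := by
    rw [lintegral_congr fun x => ENNReal.one_rpow 2, lintegral_one]
  calc (∫⁻ x, φ x ∂ν) ^ 2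
      ≤ ((∫⁻ _x, (1:ℝ≥0∞) ^ (2:ℝ) ∂ν) ^ (1/(2:ℝ)) * (∫⁻ x, φ x ^ (2:ℝ) ∂ν) ^ (1/(2:ℝ))) ^ 2 :=
        pow_le_pow_left' h 2
    _ = ν Set.univ * ∫⁻ x, φ x ^ 2 ∂ν := by
        rw [mul_pow, e1]
        congr 1
        · rw [← ENNReal.rpow_natCast _ 2, ← ENNReal.rpow_mul]
          norm_num
        · rw [← ENNReal.rpow_natCast _ 2, ← ENNReal.rpow_mul]
          norm_num

end MoreHelpers

namespace AtomicPartition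

variable {Ω : Type*} {m : MeasurableSpace Ω} {μ : Measure Ω}

/-- `Σ_j μ(B_j ∩ s) = μ s`. -/
lemma tsum_measure_atom_inter (P : AtomicPartition μ) {s : Set Ω} (hs : MeasurableSet s) :
    ∑' j, μ (P.atom j ∩ s) = μ s := by
  rw [← measure_iUnion (fun j k hjk => (P.disjoint hjk).mono
      Set.inter_subset_left Set.inter_subset_left)
    (fun j => (P.measurableSet j).inter hs), ← Set.iUnion_inter, P.cover, Set.univ_inter]

/-- single-atom contraction: `‖val‖² μ(B) ≤ ∫_B ‖f‖²`. -/
lemma val_sq_mul_le (P : AtomicPartition μ) {f : Ω → ℂ} (hf : AEStronglyMeasurable f μ)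
    (j : P.ι) :
    (‖P.val f j‖₊ : ℝ≥0∞) ^ 2 * μ (P.atom j)
      ≤ ∫⁻ x in P.atom j, (‖f x‖₊ : ℝ≥0∞) ^ 2 ∂μ := by
  have h0 : μ (P.atom j) ≠ 0 := (P.pos j).ne'
  have ht : μ (P.atom j) ≠ ∞ := (P.lt_top j).ne
  rw [val, smul_inv_norm_sq h0 ht]
  have h1 : (‖∫ y in P.atom j, f y ∂μ‖₊ : ℝ≥0∞) ^ 2
      ≤ μ (P.atom j) * ∫⁻ x in P.atom j, (‖f x‖₊ : ℝ≥0∞) ^ 2 ∂μ := by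
    calc (‖∫ y in P.atom j, f y ∂μ‖₊ : ℝ≥0∞) ^ 2
        ≤ (∫⁻ y in P.atom j, (‖f y‖₊ : ℝ≥0∞) ∂μ) ^ 2 :=
          pow_le_pow_left' (enorm_integral_le_lintegral_enorm _) 2
      _ ≤ (μ.restrict (P.atom j)) Set.univ * ∫⁻ x in P.atom j, (‖f x‖₊ : ℝ≥0∞) ^ 2 ∂μ :=
          lintegral_sq_le _ _ hf.restrict.enorm
      _ = μ (P.atom j) * ∫⁻ x in P.atom j, (‖f x‖₊ : ℝ≥0∞) ^ 2 ∂μ := by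
          rw [Measure.restrict_apply MeasurableSet.univ, Set.univ_inter]
  calc (‖∫ y in P.atom j, f y ∂μ‖₊ : ℝ≥0∞) ^ 2 * (μ (P.atom j))⁻¹
      ≤ (μ (P.atom j) * ∫⁻ x in P.atom j, (‖f x‖₊ : ℝ≥0∞) ^ 2 ∂μ) * (μ (P.atom j))⁻¹ := by
        gcongr
    _ = ∫⁻ x in P.atom j, (‖f x‖₊ : ℝ≥0∞) ^ 2 ∂μ := by
        rw [mul_comm (μ (P.atom j)), mul_assoc, ENNReal.mul_inv_cancel h0 ht, mul_one]

/-- global contraction in `L²` (squared, lintegral form). -/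
lemma tsum_val_sq_le (P : AtomicPartition μ) {f : Ω → ℂ} (hf : AEStronglyMeasurable f μ) :
    ∑' j, (‖P.val f j‖₊ : ℝ≥0∞) ^ 2 * μ (P.atom j) ≤ ∫⁻ x, (‖f x‖₊ : ℝ≥0∞) ^ 2 ∂μ := by
  rw [P.lintegral_eq_tsum (fun x => (‖f x‖₊ : ℝ≥0∞) ^ 2)]
  exact Summable.tsum_le_tsum (fun j => P.val_sq_mul_le hf j) ENNReal.summable ENNReal.summable

/-- the squared `L²` mass of a conditional expectation. -/
lemma lintegral_condExp_sq (P : AtomicPartition μ) (f : Ω → ℂ) :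
    ∫⁻ x, (‖P.condExp f x‖₊ : ℝ≥0∞) ^ 2 ∂μ
      = ∑' i, (‖P.val f i‖₊ : ℝ≥0∞) ^ 2 * μ (P.atom i) := by
  rw [P.lintegral_eq_tsum (fun x => (‖P.condExp f x‖₊ : ℝ≥0∞) ^ 2)]
  exact tsum_congr fun i => P.setLIntegral_condExp (fun z => (‖z‖₊ : ℝ≥0∞) ^ 2) f i

end AtomicPartition

namespace AtomicPartition

variable {Ω : Type*} {m : MeasurableSpace Ω} {μ : Measure Ω}

lemma sum_mass_ne_top (P : AtomicPartition μ) {f : Ω → ℂ} {s : Set Ω}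
    (hs : MeasurableSet s) (hμs : μ s ≠ ∞)
    (hIf : ∑' j, (‖P.val f j‖₊ : ℝ≥0∞) ^ 2 * μ (P.atom j) ≠ ∞) :
    ∑' j, (‖P.val f j‖₊ : ℝ≥0∞) * μ (P.atom j ∩ s) ≠ ∞ := by
  haveI := P.countable
  set a : P.ι → ℝ≥0∞ := fun j => μ (P.atom j ∩ s) * (μ (P.atom j) ^ (1/2:ℝ))⁻¹ with ha
  set b : P.ι → ℝ≥0∞ := fun j => μ (P.atom j) ^ (1/2:ℝ) * (‖P.val f j‖₊ : ℝ≥0∞) with hb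
  have hsqB : ∀ j, μ (P.atom j) ^ (1/2:ℝ) ≠ 0 ∧ μ (P.atom j) ^ (1/2:ℝ) ≠ ∞ := fun j =>
    ⟨by simp [ENNReal.rpow_eq_zero_iff, ((P.pos j).ne' : μ (P.atom j) ≠ 0), (P.lt_top j).ne],
     by simp [ENNReal.rpow_eq_top_iff, ((P.pos j).ne' : μ (P.atom j) ≠ 0), (P.lt_top j).ne]⟩
  have hab : ∀ j, (‖P.val f j‖₊ : ℝ≥0∞) * μ (P.atom j ∩ s) = a j * b j := by
    intro j
    rw [ha, hb]
    calc (‖P.val f j‖₊ : ℝ≥0∞) * μ (P.atom j ∩ s)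
        = ((μ (P.atom j) ^ (1/2:ℝ))⁻¹ * μ (P.atom j) ^ (1/2:ℝ))
            * ((‖P.val f j‖₊ : ℝ≥0∞) * μ (P.atom j ∩ s)) := by
          rw [ENNReal.inv_mul_cancel (hsqB j).1 (hsqB j).2, one_mul]
      _ = μ (P.atom j ∩ s) * (μ (P.atom j) ^ (1/2:ℝ))⁻¹
            * (μ (P.atom j) ^ (1/2:ℝ) * (‖P.val f j‖₊ : ℝ≥0∞)) := by ring
  have hA : ∑' j, a j ^ 2 ≤ μ s := by
    calc ∑' j, a j ^ 2 ≤ ∑' j, μ (P.atom j ∩ s) := by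
          refine Summable.tsum_le_tsum (fun j => ?_) ENNReal.summable ENNReal.summable
          rw [ha]
          calc (μ (P.atom j ∩ s) * (μ (P.atom j) ^ (1/2:ℝ))⁻¹) ^ 2
              = μ (P.atom j ∩ s) * (μ (P.atom j ∩ s) * ((μ (P.atom j) ^ (1/2:ℝ))⁻¹) ^ 2) := by
                ring
            _ ≤ μ (P.atom j ∩ s) * (μ (P.atom j) * ((μ (P.atom j) ^ (1/2:ℝ))⁻¹) ^ 2) :=
                mul_le_mul_right (mul_le_mul_left
                  (measure_mono Set.inter_subset_left) _) _
            _ = μ (P.atom j ∩ s) * (μ (P.atom j) * (μ (P.atom j))⁻¹) := by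
                congr 1
                rw [← ENNReal.inv_pow, ← ENNReal.rpow_natCast (μ (P.atom j) ^ (1/2:ℝ)) 2,
                  ← ENNReal.rpow_mul]
                norm_num
            _ ≤ μ (P.atom j ∩ s) := by
                rw [ENNReal.mul_inv_cancel ((P.pos j).ne') (P.lt_top j).ne, mul_one]
      _ = μ s := P.tsum_measure_atom_inter hs
  have hB : ∑' j, b j ^ 2 = ∑' j, (‖P.val f j‖₊ : ℝ≥0∞) ^ 2 * μ (P.atom j) := by
    refine tsum_congr fun j => ?_
    rw [hb, mul_pow, ← ENNReal.rpow_natCast (μ (P.atom j) ^ (1/2:ℝ)) 2, ← ENNReal.rpow_mul]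
    norm_num
    ring
  have hCS := ennreal_cauchy_schwarz a b
  intro htop
  rw [show (∑' j, (‖P.val f j‖₊ : ℝ≥0∞) * μ (P.atom j ∩ s)) = ∑' j, a j * b j from
    tsum_congr hab] at htop
  rw [htop] at hCS
  rw [show ((⊤:ℝ≥0∞) ^ 2 = ⊤) from by norm_num] at hCS
  have : (∑' j, a j ^ 2) * (∑' j, b j ^ 2) ≠ ⊤ := by
    rw [hB]
    exact ENNReal.mul_ne_top (ne_top_of_le_ne_top hμs hA) hIf
  exact this (top_le_iff.1 hCS)

lemma integrableOn_condExp (P : AtomicPartition μ) {f : Ω → ℂ} {s : Set Ω}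
    (hμs : μ s ≠ ∞)
    (hIf : ∑' j, (‖P.val f j‖₊ : ℝ≥0∞) ^ 2 * μ (P.atom j) ≠ ∞) :
    IntegrableOn (P.condExp f) s μ := by
  refine ⟨(P.measurable_condExp f).aestronglyMeasurable.restrict, ?_⟩
  simp only [hasFiniteIntegral_def, enorm_eq_nnnorm]
  have h1 : (∫⁻ x in s, (‖P.condExp f x‖₊ : ℝ≥0∞) ∂μ) ^ 2
      ≤ μ s * ∑' j, (‖P.val f j‖₊ : ℝ≥0∞) ^ 2 * μ (P.atom j) := by
    calc (∫⁻ x in s, (‖P.condExp f x‖₊ : ℝ≥0∞) ∂μ) ^ 2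
        ≤ (μ.restrict s) Set.univ * ∫⁻ x in s, (‖P.condExp f x‖₊ : ℝ≥0∞) ^ 2 ∂μ :=
          lintegral_sq_le _ _
            ((P.measurable_condExp f).nnnorm.coe_nnreal_ennreal).aemeasurable
      _ ≤ μ s * ∫⁻ x, (‖P.condExp f x‖₊ : ℝ≥0∞) ^ 2 ∂μ := by
          rw [Measure.restrict_apply MeasurableSet.univ, Set.univ_inter]
          gcongr
          exact Measure.restrict_le_self
      _ = μ s * ∑' j, (‖P.val f j‖₊ : ℝ≥0∞) ^ 2 * μ (P.atom j) := by
          rw [P.lintegral_condExp_sq f]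
  have h2 : μ s * ∑' j, (‖P.val f j‖₊ : ℝ≥0∞) ^ 2 * μ (P.atom j) ≠ ⊤ :=
    ENNReal.mul_ne_top hμs hIf
  rw [lt_top_iff_ne_top]
  intro htop
  rw [htop, show ((⊤:ℝ≥0∞) ^ 2 = ⊤) from by norm_num] at h1
  exact h2 (top_le_iff.1 h1)
  
open Classical in
lemma setIntegral_condExp (P : AtomicPartition μ) {f : Ω → ℂ} {s : Set Ω}
    (hs : MeasurableSet s) (hμs : μ s ≠ ∞)
    (hIf : ∑' j, (‖P.val f j‖₊ : ℝ≥0∞) ^ 2 * μ (P.atom j) ≠ ∞) :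
    ∫ x in s, P.condExp f x ∂μ = ∑' j, (μ (P.atom j ∩ s)).toReal • P.val f j := by
  haveI := P.countable
  have hlin : ∀ j, ∫⁻ x in s, (‖(P.atom j).indicator (fun _ => P.val f j) x‖₊ : ℝ≥0∞) ∂μ
      = (‖P.val f j‖₊ : ℝ≥0∞) * μ (P.atom j ∩ s) := by
    intro j
    have : ∀ x, (‖(P.atom j).indicator (fun _ => P.val f j) x‖₊ : ℝ≥0∞)
        = (P.atom j).indicator (fun _ => (‖P.val f j‖₊ : ℝ≥0∞)) x := by
      intro x
      by_cases hx : x ∈ P.atom j <;> simp [hx]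
    rw [lintegral_congr this, lintegral_indicator_const (P.measurableSet j),
      Measure.restrict_apply (P.measurableSet j)]
  have key := integral_tsum (μ := μ.restrict s)
    (f := fun j => (P.atom j).indicator (fun _ => P.val f j))
    (fun j => ((stronglyMeasurable_const.indicator (P.measurableSet j)).aestronglyMeasurable))
    (by
      simp only [enorm_eq_nnnorm]
      rw [show (∑' j, ∫⁻ x, (‖(P.atom j).indicator (fun _ => P.val f j) x‖₊ : ℝ≥0∞) ∂(μ.restrict s))
          = ∑' j, (‖P.val f j‖₊ : ℝ≥0∞) * μ (P.atom j ∩ s) from tsum_congr hlin]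
      exact P.sum_mass_ne_top hs hμs hIf)
  have lhs_eq : ∫ x in s, P.condExp f x ∂μ
      = ∫ x in s, (∑' j, (P.atom j).indicator (fun _ => P.val f j) x) ∂μ := rfl
  rw [lhs_eq, key]
  refine tsum_congr fun j => ?_
  rw [integral_indicator_const (P.val f j) (P.measurableSet j),
    measureReal_restrict_apply (P.measurableSet j)]
  rfl

end AtomicPartition

section OneSided

variable {Ω : Type*} {m : MeasurableSpace Ω} {μ : Measure Ω}

lemma eLpNorm_two_eq (h : Ω → ℂ) :
    eLpNorm h 2 μ = (∫⁻ x, (‖h x‖₊ : ℝ≥0∞) ^ 2 ∂μ) ^ (1/2:ℝ) := by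
  rw [eLpNorm_eq_lintegral_rpow_enorm_toReal (p := 2) (by norm_num) (by norm_num)]
  norm_num
  simp only [enorm_eq_nnnorm]

lemma lintegral_sq_ne_top {f : Ω → ℂ} (hf : MemLp f 2 μ) :
    ∫⁻ x, (‖f x‖₊ : ℝ≥0∞) ^ 2 ∂μ ≠ ⊤ := by
  have h2 := hf.2
  rw [eLpNorm_two_eq] at h2
  intro htop
  rw [htop, ENNReal.top_rpow_of_pos (by norm_num)] at h2
  exact (lt_irrefl _) h2

open Classical in
lemma oneSided (μ : Measure Ω) (Pa Pb : AtomicPartition μ) (A0 : Option Pa.ι)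
    (hγlt : (⨆ i ∈ {i : Pa.ι | some i ≠ A0}, atomSum μ Pa Pb i) < 1)
    (hinf : μ Set.univ = ∞ → A0 = none)
    (f : Ω → ℂ) (hf : MemLp f 2 μ) (hmean : μ Set.univ < ∞ → ∫ x, f x ∂μ = 0) :
    eLpNorm (Pa.condExp (Pb.condExp f)) 2 μ
      ≤ (⨆ i ∈ {i : Pa.ι | some i ≠ A0}, atomSum μ Pa Pb i) ^ (1/2:ℝ)
          * eLpNorm f 2 μ := by
  haveI := Pa.countable; haveI := Pb.countable
  set γ := ⨆ i ∈ {i : Pa.ι | some i ≠ A0}, atomSum μ Pa Pb i with hγdef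
  have hrow : ∀ i : Pa.ι, some i ≠ A0 → atomSum μ Pa Pb i ≤ γ := fun i hi =>
    le_iSup₂ (f := fun (i : Pa.ι) (_ : i ∈ {i : Pa.ι | some i ≠ A0}) => atomSum μ Pa Pb i) i hi
  have hIf2 : ∫⁻ x, (‖f x‖₊ : ℝ≥0∞) ^ 2 ∂μ ≠ ⊤ := lintegral_sq_ne_top hf
  have hGle : ∑' j, (‖Pb.val f j‖₊ : ℝ≥0∞) ^ 2 * μ (Pb.atom j)
      ≤ ∫⁻ x, (‖f x‖₊ : ℝ≥0∞) ^ 2 ∂μ := Pb.tsum_val_sq_le hf.1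
  have hGne : ∑' j, (‖Pb.val f j‖₊ : ℝ≥0∞) ^ 2 * μ (Pb.atom j) ≠ ⊤ :=
    ne_top_of_le_ne_top hIf2 hGle
  -- `t`-formula on every set of finite measure
  have hval : ∀ i : Pa.ι, (μ (Pa.atom i)).toReal • Pa.val (Pb.condExp f) i
      = ∫ x in Pa.atom i, Pb.condExp f x ∂μ := by
    intro i
    have : (μ (Pa.atom i)).toReal ≠ 0 :=
      (ENNReal.toReal_pos (Pa.pos i).ne' (Pa.lt_top i).ne).ne'
    rw [AtomicPartition.val, smul_inv_smul₀ this]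
  -- THE per-atom (row) estimate, for a generic shift θ
  have key : ∀ (θ : ℂ) (i : Pa.ι), atomSum μ Pa Pb i < 1 →
      (‖Pa.val (Pb.condExp f) i - θ‖₊ : ℝ≥0∞) ^ 2 * μ (Pa.atom i)
        ≤ atomSum μ Pa Pb i * ∑' j, (if 0 < μ (Pa.atom i ∩ Pb.atom j)
            then μ (Pb.atom j) * (‖Pb.val f j - θ‖₊ : ℝ≥0∞) ^ 2 / rCard μ Pa Pb j else 0) := by
    intro θ i hlt
    have hw0 : μ (Pa.atom i) ≠ 0 := (Pa.pos i).ne'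
    have hwt : μ (Pa.atom i) ≠ ⊤ := (Pa.lt_top i).ne
    have hmform : (μ (Pa.atom i)).toReal • Pa.val (Pb.condExp f) i
        = ∑' j, (μ (Pb.atom j ∩ Pa.atom i)).toReal • Pb.val f j := by
      rw [hval i]
      exact Pb.setIntegral_condExp (Pa.measurableSet i) hwt hGne
    have hmne : ∀ j, μ (Pb.atom j ∩ Pa.atom i) ≠ ⊤ :=
      fun j => (lt_of_le_of_lt (measure_mono Set.inter_subset_left) (Pb.lt_top j)).ne
    have hmsum : ∑' j, μ (Pb.atom j ∩ Pa.atom i) = μ (Pa.atom i) :=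
      Pb.tsum_measure_atom_inter (Pa.measurableSet i)
    have hmassR : Summable (fun j => (μ (Pb.atom j ∩ Pa.atom i)).toReal) :=
      ENNReal.summable_toReal (by rw [hmsum]; exact hwt)
    have hsummass : Summable (fun j => (μ (Pb.atom j ∩ Pa.atom i)).toReal • Pb.val f j) := by
      refine Summable.of_nnnorm (ENNReal.tsum_coe_ne_top_iff_summable.1 ?_)
      have e : ∀ j : Pb.ι, ((‖(μ (Pb.atom j ∩ Pa.atom i)).toReal • Pb.val f j‖₊ : NNReal) : ℝ≥0∞)
          = (‖Pb.val f j‖₊ : ℝ≥0∞) * μ (Pb.atom j ∩ Pa.atom i) := fun j => by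
        rw [norm_toReal_smul (hmne j), mul_comm]
      rw [tsum_congr e]
      exact Pb.sum_mass_ne_top (Pa.measurableSet i) hwt hGne
    have hDeq : (μ (Pa.atom i)).toReal • (Pa.val (Pb.condExp f) i - θ)
        = ∑' j, (μ (Pb.atom j ∩ Pa.atom i)).toReal • (Pb.val f j - θ) := by
      have e1 : ∀ j, (μ (Pb.atom j ∩ Pa.atom i)).toReal • (Pb.val f j - θ)
          = (μ (Pb.atom j ∩ Pa.atom i)).toReal • Pb.val f j
            - (μ (Pb.atom j ∩ Pa.atom i)).toReal • θ := fun j => smul_sub _ _ _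
      rw [tsum_congr e1, Summable.tsum_sub hsummass (hmassR.smul_const θ), ← hmform,
        Summable.tsum_smul_const hmassR θ]
      have e2 : ∑' j, (μ (Pb.atom j ∩ Pa.atom i)).toReal = (μ (Pa.atom i)).toReal := by
        rw [← ENNReal.tsum_toReal_eq hmne, hmsum]
      rw [e2, smul_sub]
    have hnle : (‖(μ (Pa.atom i)).toReal • (Pa.val (Pb.condExp f) i - θ)‖₊ : ℝ≥0∞)
        ≤ ∑' j, μ (Pa.atom i ∩ Pb.atom j) * (‖Pb.val f j - θ‖₊ : ℝ≥0∞) := by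
      rw [hDeq]
      refine le_trans (enn_norm_tsum_le _) ?_
      refine Summable.tsum_le_tsum (fun j => ?_) ENNReal.summable ENNReal.summable
      rw [norm_toReal_smul (hmne j), Set.inter_comm]
    -- assemble
    have hz : (μ (Pa.atom i)).toReal⁻¹ • ((μ (Pa.atom i)).toReal • (Pa.val (Pb.condExp f) i - θ))
        = Pa.val (Pb.condExp f) i - θ :=
      inv_smul_smul₀ (ENNReal.toReal_pos hw0 hwt).ne' _
    calc (‖Pa.val (Pb.condExp f) i - θ‖₊ : ℝ≥0∞) ^ 2 * μ (Pa.atom i)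
        = (‖(μ (Pa.atom i)).toReal • (Pa.val (Pb.condExp f) i - θ)‖₊ : ℝ≥0∞) ^ 2
            * (μ (Pa.atom i))⁻¹ := by
          rw [← smul_inv_norm_sq hw0 hwt, hz]
      _ ≤ (∑' j, μ (Pa.atom i ∩ Pb.atom j) * (‖Pb.val f j - θ‖₊ : ℝ≥0∞)) ^ 2
            * (μ (Pa.atom i))⁻¹ := by gcongr
      _ ≤ ((μ (Pa.atom i) * atomSum μ Pa Pb i)
            * ∑' j, (if 0 < μ (Pa.atom i ∩ Pb.atom j)
                then μ (Pb.atom j) * (‖Pb.val f j - θ‖₊ : ℝ≥0∞) ^ 2 / rCard μ Pa Pb j else 0))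
            * (μ (Pa.atom i))⁻¹ := by
          gcongr
          exact row_bound Pa Pb i hlt _
      _ = (μ (Pa.atom i) * (μ (Pa.atom i))⁻¹) * (atomSum μ Pa Pb i
            * ∑' j, (if 0 < μ (Pa.atom i ∩ Pb.atom j)
                then μ (Pb.atom j) * (‖Pb.val f j - θ‖₊ : ℝ≥0∞) ^ 2 / rCard μ Pa Pb j else 0)) := by
          ring
      _ = atomSum μ Pa Pb i * ∑' j, (if 0 < μ (Pa.atom i ∩ Pb.atom j)
            then μ (Pb.atom j) * (‖Pb.val f j - θ‖₊ : ℝ≥0∞) ^ 2 / rCard μ Pa Pb j else 0) := by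
          rw [ENNReal.mul_inv_cancel hw0 hwt, one_mul]
  -- the counting bound, for a generic shift θ
  have hcount : ∀ θ : ℂ,
      ∑' (i : Pa.ι), ∑' j, (if 0 < μ (Pa.atom i ∩ Pb.atom j)
          then μ (Pb.atom j) * (‖Pb.val f j - θ‖₊ : ℝ≥0∞) ^ 2 / rCard μ Pa Pb j else 0)
        ≤ ∑' j, μ (Pb.atom j) * (‖Pb.val f j - θ‖₊ : ℝ≥0∞) ^ 2 := by
    intro θ
    simpa only [rCard] using counting_le (fun i j => 0 < μ (Pa.atom i ∩ Pb.atom j))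
      (fun j => μ (Pb.atom j) * (‖Pb.val f j - θ‖₊ : ℝ≥0∞) ^ 2)
  -- total masses
  have hUa : ∑' i, μ (Pa.atom i) = μ Set.univ := by
    rw [← Pa.cover, measure_iUnion Pa.disjoint Pa.measurableSet]
  have hUb : ∑' j, μ (Pb.atom j) = μ Set.univ := by
    rw [← Pb.cover, measure_iUnion Pb.disjoint Pb.measurableSet]
  -- reduce to the squared lintegral inequality
  suffices hX : ∫⁻ x, (‖Pa.condExp (Pb.condExp f) x‖₊ : ℝ≥0∞) ^ 2 ∂μ
      ≤ γ * ∫⁻ x, (‖f x‖₊ : ℝ≥0∞) ^ 2 ∂μ by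
    rw [eLpNorm_two_eq, eLpNorm_two_eq]
    calc (∫⁻ x, (‖Pa.condExp (Pb.condExp f) x‖₊ : ℝ≥0∞) ^ 2 ∂μ) ^ (1/2:ℝ)
        ≤ (γ * ∫⁻ x, (‖f x‖₊ : ℝ≥0∞) ^ 2 ∂μ) ^ (1/2:ℝ) :=
          ENNReal.rpow_le_rpow hX (by norm_num)
      _ = γ ^ (1/2:ℝ) * (∫⁻ x, (‖f x‖₊ : ℝ≥0∞) ^ 2 ∂μ) ^ (1/2:ℝ) :=
          ENNReal.mul_rpow_of_nonneg _ _ (by norm_num)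
  rw [Pa.lintegral_condExp_sq]
  -- case split on the distinguished atom
  clear_value γ
  rcases A0 with - | a0
  · -- infinite (or no distinguished atom) case : θ = 0
    calc ∑' i, (‖Pa.val (Pb.condExp f) i‖₊ : ℝ≥0∞) ^ 2 * μ (Pa.atom i)
        ≤ ∑' i, γ * ∑' j, (if 0 < μ (Pa.atom i ∩ Pb.atom j)
            then μ (Pb.atom j) * (‖Pb.val f j - (0:ℂ)‖₊ : ℝ≥0∞) ^ 2 / rCard μ Pa Pb j else 0) := by
          refine Summable.tsum_le_tsum (fun i => ?_) ENNReal.summable ENNReal.summable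
          have h1 : atomSum μ Pa Pb i < 1 :=
            lt_of_le_of_lt (hrow i (Option.some_ne_none i)) hγlt
          have h2 := key 0 i h1
          rw [sub_zero] at h2
          exact h2.trans (mul_le_mul_left (hrow i (Option.some_ne_none i)) _)
      _ = γ * ∑' (i : Pa.ι), ∑' j, (if 0 < μ (Pa.atom i ∩ Pb.atom j)
            then μ (Pb.atom j) * (‖Pb.val f j - (0:ℂ)‖₊ : ℝ≥0∞) ^ 2 / rCard μ Pa Pb j else 0) :=
          ENNReal.tsum_mul_left
      _ ≤ γ * ∑' j, μ (Pb.atom j) * (‖Pb.val f j - (0:ℂ)‖₊ : ℝ≥0∞) ^ 2 :=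
          mul_le_mul_right (hcount 0) γ
      _ = γ * ∑' j, (‖Pb.val f j‖₊ : ℝ≥0∞) ^ 2 * μ (Pb.atom j) := by
          congr 1
          exact tsum_congr fun j => by rw [sub_zero, mul_comm]
      _ ≤ γ * ∫⁻ x, (‖f x‖₊ : ℝ≥0∞) ^ 2 ∂μ := mul_le_mul_right hGle γ
  · -- finite case : θ = value on the distinguished atom
    have hμfin : μ Set.univ ≠ ⊤ := fun h => Option.some_ne_none a0 (hinf h)
    haveI : IsFiniteMeasure μ := ⟨lt_top_iff_ne_top.2 hμfin⟩
    have hμlt : μ Set.univ < ⊤ := lt_top_iff_ne_top.2 hμfin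
    have hfint : Integrable f μ :=
      memLp_one_iff_integrable.1 (hf.mono_exponent (by norm_num))
    set θ := Pa.val (Pb.condExp f) a0 with hθdef
    -- B-side centre of mass is zero
    have hvalB : ∀ j : Pb.ι, (μ (Pb.atom j)).toReal • Pb.val f j = ∫ x in Pb.atom j, f x ∂μ := by
      intro j
      rw [AtomicPartition.val, smul_inv_smul₀
        (ENNReal.toReal_pos (Pb.pos j).ne' (Pb.lt_top j).ne).ne']
    have hBsum0 : HasSum (fun j => (μ (Pb.atom j)).toReal • Pb.val f j) 0 := by
      have h2 := hasSum_integral_iUnion Pb.measurableSet Pb.disjoint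
        (hfint.integrableOn : IntegrableOn f (⋃ j, Pb.atom j) μ)
      rw [Pb.cover, setIntegral_univ, hmean hμlt] at h2
      exact h2.congr_fun fun j => hvalB j
    -- the conditional expectation has mean zero as well
    have hgzero : ∫ x, Pb.condExp f x ∂μ = 0 := by
      have h3 := Pb.setIntegral_condExp MeasurableSet.univ hμfin hGne
      rw [setIntegral_univ] at h3
      rw [h3]
      have h4 : ∀ j : Pb.ι, (μ (Pb.atom j ∩ Set.univ)).toReal • Pb.val f j
          = (μ (Pb.atom j)).toReal • Pb.val f j := fun j => by rw [Set.inter_univ]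
      rw [tsum_congr h4, hBsum0.tsum_eq]
    have hAsum0 : HasSum (fun i => (μ (Pa.atom i)).toReal • Pa.val (Pb.condExp f) i) 0 := by
      have h2 := hasSum_integral_iUnion Pa.measurableSet Pa.disjoint
        ((Pb.integrableOn_condExp (s := Set.univ) hμfin hGne).mono_set
          (Set.subset_univ _) : IntegrableOn (Pb.condExp f) (⋃ i, Pa.atom i) μ)
      rw [Pa.cover, setIntegral_univ, hgzero] at h2
      exact h2.congr_fun fun i => hval i
    -- the two Pythagoras identities
    have hApyth := pythagoras_shift (fun i => μ (Pa.atom i)) (Pa.val (Pb.condExp f)) θ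
      (fun i => (Pa.lt_top i).ne) (by rw [hUa]; exact hμfin) hAsum0
    have hBpyth := pythagoras_shift (fun j => μ (Pb.atom j)) (Pb.val f) θ
      (fun j => (Pb.lt_top j).ne) (by rw [hUb]; exact hμfin) hBsum0
    rw [hUa] at hApyth
    rw [hUb] at hBpyth
    set T := (‖θ‖₊ : ℝ≥0∞) ^ 2 * μ Set.univ with hTdef
    have hTne : T ≠ ⊤ :=
      ENNReal.mul_ne_top (ENNReal.pow_ne_top ENNReal.coe_ne_top) hμfin
    -- the central estimate
    have hstep : ∑' i, μ (Pa.atom i) * (‖Pa.val (Pb.condExp f) i - θ‖₊ : ℝ≥0∞) ^ 2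
        ≤ γ * ∑' j, μ (Pb.atom j) * (‖Pb.val f j - θ‖₊ : ℝ≥0∞) ^ 2 := by
      calc ∑' i, μ (Pa.atom i) * (‖Pa.val (Pb.condExp f) i - θ‖₊ : ℝ≥0∞) ^ 2
          ≤ ∑' i, γ * ∑' j, (if 0 < μ (Pa.atom i ∩ Pb.atom j)
              then μ (Pb.atom j) * (‖Pb.val f j - θ‖₊ : ℝ≥0∞) ^ 2 / rCard μ Pa Pb j else 0) := by
            refine Summable.tsum_le_tsum (fun i => ?_) ENNReal.summable ENNReal.summable
            by_cases hia : i = a0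
            · subst hia
              rw [← hθdef, sub_self]
              simp
            · have h1 : atomSum μ Pa Pb i < 1 := lt_of_le_of_lt
                (hrow i (fun h => hia (Option.some_inj.mp h))) hγlt
              have h2 := key θ i h1
              rw [mul_comm (μ (Pa.atom i))]
              exact h2.trans (mul_le_mul_left
                (hrow i (fun h => hia (Option.some_inj.mp h))) _)
        _ = γ * ∑' (i : Pa.ι), ∑' j, (if 0 < μ (Pa.atom i ∩ Pb.atom j)
              then μ (Pb.atom j) * (‖Pb.val f j - θ‖₊ : ℝ≥0∞) ^ 2 / rCard μ Pa Pb j else 0) :=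
            ENNReal.tsum_mul_left
        _ ≤ γ * ∑' j, μ (Pb.atom j) * (‖Pb.val f j - θ‖₊ : ℝ≥0∞) ^ 2 :=
            mul_le_mul_right (hcount θ) γ
    -- assemble and cancel T
    have hmain : (∑' i, μ (Pa.atom i) * (‖Pa.val (Pb.condExp f) i‖₊ : ℝ≥0∞) ^ 2) + T
        ≤ (γ * ∑' j, μ (Pb.atom j) * (‖Pb.val f j‖₊ : ℝ≥0∞) ^ 2) + T := by
      calc (∑' i, μ (Pa.atom i) * (‖Pa.val (Pb.condExp f) i‖₊ : ℝ≥0∞) ^ 2) + T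
          = ∑' i, μ (Pa.atom i) * (‖Pa.val (Pb.condExp f) i - θ‖₊ : ℝ≥0∞) ^ 2 := hApyth.symm
        _ ≤ γ * ∑' j, μ (Pb.atom j) * (‖Pb.val f j - θ‖₊ : ℝ≥0∞) ^ 2 := hstep
        _ = γ * ((∑' j, μ (Pb.atom j) * (‖Pb.val f j‖₊ : ℝ≥0∞) ^ 2) + T) := by rw [hBpyth]
        _ = γ * (∑' j, μ (Pb.atom j) * (‖Pb.val f j‖₊ : ℝ≥0∞) ^ 2) + γ * T := mul_add _ _ _
        _ ≤ (γ * ∑' j, μ (Pb.atom j) * (‖Pb.val f j‖₊ : ℝ≥0∞) ^ 2) + T := by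
            gcongr
            exact mul_le_of_le_one_left' hγlt.le
    have hcancel := (ENNReal.add_le_add_iff_right hTne).1 hmain
    calc ∑' i, (‖Pa.val (Pb.condExp f) i‖₊ : ℝ≥0∞) ^ 2 * μ (Pa.atom i)
        = ∑' i, μ (Pa.atom i) * (‖Pa.val (Pb.condExp f) i‖₊ : ℝ≥0∞) ^ 2 :=
          tsum_congr fun i => mul_comm _ _
      _ ≤ γ * ∑' j, μ (Pb.atom j) * (‖Pb.val f j‖₊ : ℝ≥0∞) ^ 2 := hcancel
      _ = γ * ∑' j, (‖Pb.val f j‖₊ : ℝ≥0∞) ^ 2 * μ (Pb.atom j) := by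
          congr 1
          exact tsum_congr fun j => mul_comm _ _
      _ ≤ γ * ∫⁻ x, (‖f x‖₊ : ℝ≥0∞) ^ 2 ∂μ := mul_le_mul_right hGle γ

end OneSided


/-- strict contraction in `L₂`.  If `(Σ_a,Σ_b)` is an admissible covering
of a σ-finite `(Ω,Σ,μ)`, there exists `0 < c < 1` such that
`min(‖E_a E_b f‖₂, ‖E_b E_a f‖₂) ≤ c ‖f‖₂` for every `f ∈ L₂(μ)` when `μ(Ω) = ∞`,
and for every mean-zero `f ∈ L₂(μ)` when `μ(Ω) < ∞`. -/
theorem statement6 {Ω : Type*} [MeasurableSpace Ω] (μ : Measure Ω) [SigmaFinite μ]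
    (Pa Pb : AtomicPartition μ) (A0 : Option Pa.ι) (B0 : Option Pb.ι)
    (hAdm : IsAdmissibleCovering μ Pa Pb A0 B0) :
    ∃ c : ℝ, 0 < c ∧ c < 1 ∧ ∀ f : Ω → ℂ, MemLp f 2 μ →
      (μ Set.univ < ∞ → ∫ x, f x ∂μ = 0) →
      min (eLpNorm (Pa.condExp (Pb.condExp f)) 2 μ)
          (eLpNorm (Pb.condExp (Pa.condExp f)) 2 μ)
        ≤ ENNReal.ofReal c * eLpNorm f 2 μ := by
  have hsmall := hAdm.small
  rw [min_lt_iff] at hsmall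
  have build : ∀ γ : ℝ≥0∞, γ < 1 →
      0 < max 2⁻¹ (Real.sqrt γ.toReal) ∧ max 2⁻¹ (Real.sqrt γ.toReal) < 1 ∧
        γ ^ (1/2:ℝ) ≤ ENNReal.ofReal (max 2⁻¹ (Real.sqrt γ.toReal)) := by
    intro γ hlt
    have hγne : γ ≠ ⊤ := (hlt.trans ENNReal.one_lt_top).ne
    refine ⟨lt_of_lt_of_le (by norm_num) (le_max_left _ _), ?_, ?_⟩
    · apply max_lt (by norm_num)
      have h1 : γ.toReal < 1 := by
        have := (ENNReal.toReal_lt_toReal hγne ENNReal.one_ne_top).2 hlt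
        simpa using this
      calc Real.sqrt γ.toReal < Real.sqrt 1 :=
            Real.sqrt_lt_sqrt ENNReal.toReal_nonneg h1
        _ = 1 := Real.sqrt_one
    · calc γ ^ (1/2:ℝ) = (ENNReal.ofReal γ.toReal) ^ (1/2:ℝ) := by
            rw [ENNReal.ofReal_toReal hγne]
      _ = ENNReal.ofReal (γ.toReal ^ (1/2:ℝ)) :=
            ENNReal.ofReal_rpow_of_nonneg ENNReal.toReal_nonneg (by norm_num)
      _ = ENNReal.ofReal (Real.sqrt γ.toReal) := by rw [← Real.sqrt_eq_rpow]
      _ ≤ ENNReal.ofReal (max 2⁻¹ (Real.sqrt γ.toReal)) :=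
            ENNReal.ofReal_le_ofReal (le_max_right _ _)
  rcases hsmall with hlt | hlt
  · obtain ⟨h0, h1, h2⟩ := build _ hlt
    refine ⟨_, h0, h1, fun f hf hmean => ?_⟩
    refine le_trans (min_le_left _ _) ?_
    refine le_trans (oneSided μ Pa Pb A0 hlt (fun h => (hAdm.infinite_case h).1) f hf hmean) ?_
    exact mul_le_mul_left h2 _
  · obtain ⟨h0, h1, h2⟩ := build _ hlt
    refine ⟨_, h0, h1, fun f hf hmean => ?_⟩
    refine le_trans (min_le_right _ _) ?_
    refine le_trans (oneSided μ Pb Pa B0 hlt (fun h => (hAdm.infinite_case h).2) f hf hmean) ?_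
    exact mul_le_mul_left h2 _
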